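/- arXiv:1609.04535 — 5 statements merged into one kernel-verified Lean document; each statement's English description precedes it below -/
import Mathlib

section
/- For real constants a > 0, b > 0, c > 0, the function x ↦ log(1 + a/(b + c·x)) is convex on the interval [0, ∞). -/
/-- For a, b, c > 0, the function x ↦ log(1 + a/(b + c·x)) is convex on [0, ∞). -/
theorem interfered_rate_convexOn (a b c : ℝ)
    (ha : 0 < a) (hb : 0 < b) (hc : 0 < c) :
    ConvexOn ℝ (Set.Ici (0 : ℝ))
      (fun x : ℝ => Real.log (1 + a / (b + c * x))) := by
  set g : ℝ → ℝ := fun x => Real.log (a + b + c * x) - Real.log (b + c * x) with hg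
  -- positivity facts on Ici 0
  have hpos : ∀ x : ℝ, 0 ≤ x → 0 < b + c * x := fun x hx => by positivity
  have hpos' : ∀ x : ℝ, 0 ≤ x → 0 < a + b + c * x := fun x hx => by positivity
  -- derivative of g
  have hderivAt : ∀ x : ℝ, 0 ≤ x →
      HasDerivAt g (c / (a + b + c * x) - c / (b + c * x)) x := by
    intro x hx
    have h1 : HasDerivAt (fun y : ℝ => a + b + c * y) c x := by
      simpa using ((hasDerivAt_id x).const_mul c).const_add (a + b)
    have h2 : HasDerivAt (fun y : ℝ => b + c * y) c x := by
      simpa using ((hasDerivAt_id x).const_mul c).const_add b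
    have l1 := (Real.hasDerivAt_log (hpos' x hx).ne').comp x h1
    have l2 := (Real.hasDerivAt_log (hpos x hx).ne').comp x h2
    have := l1.sub l2
    exact this.congr_deriv (by ring)
  have hderiv_eq : ∀ x ∈ Set.Ioi (0 : ℝ),
      deriv g x = c / (a + b + c * x) - c / (b + c * x) := by
    intro x hx
    exact (hderivAt x (le_of_lt hx)).deriv
  -- second derivative pointwise
  have hderiv2At : ∀ x : ℝ, 0 ≤ x →
      HasDerivAt (fun y => c / (a + b + c * y) - c / (b + c * y))
        (-(c * c) / (a + b + c * x) ^ 2 - -(c * c) / (b + c * x) ^ 2) x := by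
    intro x hx
    have h1 : HasDerivAt (fun y : ℝ => a + b + c * y) c x := by
      simpa using ((hasDerivAt_id x).const_mul c).const_add (a + b)
    have h2 : HasDerivAt (fun y : ℝ => b + c * y) c x := by
      simpa using ((hasDerivAt_id x).const_mul c).const_add b
    have d1 := (hasDerivAt_const x c).div h1 (hpos' x hx).ne'
    have d2 := (hasDerivAt_const x c).div h2 (hpos x hx).ne'
    have := d1.sub d2
    exact this.congr_deriv (by ring)
  have hmem : ∀ x ∈ Set.Ioi (0 : ℝ), Set.Ioi (0 : ℝ) ∈ nhds x := fun x hx =>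
    isOpen_Ioi.mem_nhds hx
  have hEv : ∀ x ∈ Set.Ioi (0 : ℝ),
      deriv g =ᶠ[nhds x] fun y => c / (a + b + c * y) - c / (b + c * y) := by
    intro x hx
    filter_upwards [hmem x hx] with y hy using hderiv_eq y hy
  -- convexity of g
  have hgconv : ConvexOn ℝ (Set.Ici (0 : ℝ)) g := by
    have hint : interior (Set.Ici (0 : ℝ)) = Set.Ioi 0 := interior_Ici
    apply convexOn_of_deriv2_nonneg (convex_Ici 0)
    · intro x hx
      exact ((hderivAt x hx).continuousAt).continuousWithinAt
    · rw [hint]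
      intro x hx
      exact ((hderivAt x (le_of_lt hx)).differentiableAt).differentiableWithinAt
    · rw [hint]
      intro x hx
      have : DifferentiableAt ℝ (deriv g) x := by
        have h2 := (hderiv2At x (le_of_lt hx)).differentiableAt
        exact h2.congr_of_eventuallyEq (hEv x hx)
      exact this.differentiableWithinAt
    · rw [hint]
      intro x hx
      have hd2 : deriv (deriv g) x =
          -(c * c) / (a + b + c * x) ^ 2 - -(c * c) / (b + c * x) ^ 2 := by
        rw [Filter.EventuallyEq.deriv_eq (hEv x hx)]
        exact (hderiv2At x (le_of_lt hx)).deriv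
      have : deriv^[2] g x = deriv (deriv g) x := by
        simp [Function.iterate_succ, Function.comp]
      rw [this, hd2]
      have h1 : 0 < b + c * x := hpos x (le_of_lt hx)
      have h2 : 0 < a + b + c * x := hpos' x (le_of_lt hx)
      have hle : (b + c * x) ^ 2 ≤ (a + b + c * x) ^ 2 := by nlinarith
      have : c * c / (a + b + c * x) ^ 2 ≤ c * c / (b + c * x) ^ 2 :=
        div_le_div_of_nonneg_left (by positivity) (by positivity) hle
      have e : -(c * c) / (a + b + c * x) ^ 2 - -(c * c) / (b + c * x) ^ 2
          = c * c / (b + c * x) ^ 2 - c * c / (a + b + c * x) ^ 2 := by ring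
      rw [e]; linarith
  -- g agrees with the original function on Ici 0
  refine hgconv.congr ?_
  intro x hx
  have h1 : 0 < b + c * x := hpos x hx
  have h2 : 0 < a + b + c * x := hpos' x hx
  have : (1 : ℝ) + a / (b + c * x) = (a + b + c * x) / (b + c * x) := by
    field_simp; ring
  simp only [g, this, Real.log_div h2.ne' h1.ne']
end

section
/- Let N ≥ 1, let I be a finite index set, and for each i ∈ I let a_i > 0, b_i > 0, c_i > 0 be constants and n(i) ∈ {1,…,N} a coordinate index. Then the function F : ℝ^N → ℝ defined on the nonnegative orthant by F(p) = ∑_{i∈I} log(1 + a_i/(b_i + c_i · p_{n(i)})) is convex on {p ∈ ℝ^N : p_n ≥ 0 for all n}. -/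
open Set Real

/-- Convexity of `t ↦ log (1 + a / (b + c * t))` on `[0, ∞)`. -/
lemma convexOn_log_interf {a b c : ℝ} (ha : 0 < a) (hb : 0 < b) (hc : 0 < c) :
    ConvexOn ℝ (Ici (0:ℝ)) (fun t => Real.log (1 + a / (b + c * t))) := by
  have hpos : ∀ t : ℝ, 0 ≤ t → 0 < b + c * t := fun t ht => by positivity
  have hpos' : ∀ t : ℝ, 0 ≤ t → 0 < a + (b + c * t) := fun t ht => by positivity
  have hconv : ConvexOn ℝ (Ici (0:ℝ))
      (fun t => Real.log (a + (b + c * t)) - Real.log (b + c * t)) := by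
    have hint : interior (Ici (0:ℝ)) = Ioi 0 := interior_Ici
    refine convexOn_of_hasDerivWithinAt2_nonneg (convex_Ici 0) ?_
      (f' := fun t => c / (a + (b + c * t)) - c / (b + c * t))
      (f'' := fun t => -(c * c) / ((a + (b + c * t)) ^ 2)
        + (c * c) / ((b + c * t) ^ 2)) ?_ ?_ ?_
    · apply ContinuousOn.sub
      · refine (Real.continuousOn_log.comp (by fun_prop) ?_)
        intro t ht
        exact ne_of_gt (hpos' t ht)
      · refine (Real.continuousOn_log.comp (by fun_prop) ?_)
        intro t ht
        exact ne_of_gt (hpos t ht)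
    · intro t ht
      rw [hint] at ht
      have ht' : (0:ℝ) ≤ t := le_of_lt ht
      have h1 : HasDerivAt (fun t : ℝ => a + (b + c * t)) c t := by
        simpa using (((hasDerivAt_id t).const_mul c).const_add b).const_add a
      have h2 : HasDerivAt (fun t : ℝ => b + c * t) c t := by
        simpa using ((hasDerivAt_id t).const_mul c).const_add b
      have hd : HasDerivAt (fun t => Real.log (a + (b + c * t)) - Real.log (b + c * t))
          (c / (a + (b + c * t)) - c / (b + c * t)) t :=
        (h1.log (ne_of_gt (hpos' t ht'))).sub (h2.log (ne_of_gt (hpos t ht')))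
      exact hd.hasDerivWithinAt
    · intro t ht
      rw [hint] at ht
      have ht' : (0:ℝ) ≤ t := le_of_lt ht
      have h1 : HasDerivAt (fun t : ℝ => a + (b + c * t)) c t := by
        simpa using (((hasDerivAt_id t).const_mul c).const_add b).const_add a
      have h2 : HasDerivAt (fun t : ℝ => b + c * t) c t := by
        simpa using ((hasDerivAt_id t).const_mul c).const_add b
      have hA : HasDerivAt (fun t : ℝ => c / (a + (b + c * t)))
          (-(c * c) / ((a + (b + c * t)) ^ 2)) t := by
        have := (hasDerivAt_const t c).div h1 (ne_of_gt (hpos' t ht'))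
        rw [show -(c * c) / (a + (b + c * t)) ^ 2 = (0 * (a + (b + c * t)) - c * c) / (a + (b + c * t)) ^ 2 by ring]
        exact this
      have hB : HasDerivAt (fun t : ℝ => c / (b + c * t))
          (-(c * c) / ((b + c * t) ^ 2)) t := by
        have := (hasDerivAt_const t c).div h2 (ne_of_gt (hpos t ht'))
        rw [show -(c * c) / (b + c * t) ^ 2 = (0 * (b + c * t) - c * c) / (b + c * t) ^ 2 by ring]
        exact this
      have := hA.sub hB
      refine HasDerivAt.hasDerivWithinAt ?_
      convert this using 1
      · rfl
      · ring
    · intro t ht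
      rw [hint] at ht
      have ht' : (0:ℝ) ≤ t := le_of_lt ht
      have h1 := hpos t ht'
      have h2 := hpos' t ht'
      have hle : (b + c * t) ^ 2 ≤ (a + (b + c * t)) ^ 2 := by nlinarith
      have : (c * c) / ((a + (b + c * t)) ^ 2) ≤ (c * c) / ((b + c * t) ^ 2) := by
        apply div_le_div_of_nonneg_left (by positivity) (by positivity) hle
      rw [neg_div]
      linarith [this]
  refine hconv.congr ?_
  intro t ht
  have h1 := hpos t ht
  have h2 := hpos' t ht
  simp only
  rw [← Real.log_div (ne_of_gt h2) (ne_of_gt h1)]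
  congr 1
  field_simp
  ring

/-- The sum of interfered rate terms, as a function of user k's power vector
p ∈ ℝ^N, is convex on the nonnegative orthant. -/
theorem sum_interfered_rates_convexOn (N : ℕ) (hN : 1 ≤ N)
    {I : Type*} [Fintype I]
    (a b c : I → ℝ) (ha : ∀ i, 0 < a i) (hb : ∀ i, 0 < b i) (hc : ∀ i, 0 < c i)
    (n : I → Fin N) :
    ConvexOn ℝ {p : Fin N → ℝ | ∀ m, 0 ≤ p m}
      (fun p : Fin N → ℝ =>
        ∑ i, Real.log (1 + a i / (b i + c i * p (n i)))) := by
  have hs : Convex ℝ {p : Fin N → ℝ | ∀ m, 0 ≤ p m} := by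
    intro x hx y hy s t hs' ht' hst m
    have h := add_nonneg (mul_nonneg hs' (hx m)) (mul_nonneg ht' (hy m))
    simpa [smul_eq_mul] using h
  have hterm : ∀ i : I, ConvexOn ℝ {p : Fin N → ℝ | ∀ m, 0 ≤ p m}
      (fun p : Fin N → ℝ => Real.log (1 + a i / (b i + c i * p (n i)))) := by
    intro i
    have h1 := convexOn_log_interf (ha i) (hb i) (hc i)
    have haff : ConvexOn ℝ
        ((fun p : Fin N → ℝ => p (n i)) ⁻¹' (Ici (0:ℝ)))
        ((fun t => Real.log (1 + a i / (b i + c i * t))) ∘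
          (fun p : Fin N → ℝ => p (n i))) :=
      h1.comp_affineMap (AffineMap.mk (fun p : Fin N → ℝ => p (n i))
        (LinearMap.proj (n i)) (fun _ _ => rfl))
    refine (haff.subset ?_ hs)
    intro p hp
    exact hp (n i)
  classical
  have hsum : ConvexOn ℝ {p : Fin N → ℝ | ∀ m, 0 ≤ p m}
      (∑ i : I, fun p : Fin N → ℝ => Real.log (1 + a i / (b i + c i * p (n i)))) :=
    Finset.sum_induction _ (fun f => ConvexOn ℝ {p : Fin N → ℝ | ∀ m, 0 ≤ p m} f)
      (fun f g hf hg => hf.add hg) (convexOn_const 0 hs) (fun i _ => hterm i)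
  refine hsum.congr fun p _ => ?_
  simp [Finset.sum_apply]
end

section
/- Let N ≥ 1, let i_n > 0 for n = 1,…,N, let F : ℝ^N → ℝ be convex and differentiable on the nonnegative orthant, set R_k(x) = ∑_{n=1}^N log₂(1 + x_n/i_n) + F(x), and R̃(x; y) = ∑_{n=1}^N log₂(1 + x_n/i_n) + F(y) + ∇F(y)·(x − y). Let S be a subset of the nonnegative orthant, let y ∈ S, and suppose x* ∈ S maximizes R̃(·; y) over S. Then R_k(x*) ≥ R_k(y); that is, the solution of the approximated distributed problem is a better response: it cannot decrease the exact sum rate. -/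
open Set

/-- First-order condition: a convex differentiable function lies above its tangent. -/
lemma convex_first_order {E : Type*} [NormedAddCommGroup E] [NormedSpace ℝ E]
    {s : Set E} {F : E → ℝ} {F' : E →L[ℝ] ℝ}
    (hconv : ConvexOn ℝ s F) {y : E} (hy : y ∈ s)
    (hd : HasFDerivWithinAt F F' s y) {x : E} (hx : x ∈ s) :
    F y + F' (x - y) ≤ F x := by
  rcases eq_or_ne x y with rfl | hne
  · simp
  set φ : ℝ → E := fun t => y + t • (x - y) with hφ
  have hmaps : ∀ t ∈ Icc (0:ℝ) 1, φ t ∈ s := by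
    intro t ht
    have := hconv.1 hy hx (by linarith [ht.2] : (0:ℝ) ≤ 1 - t) ht.1 (by ring)
    convert this using 1
    simp [hφ]
    module
  have hg : ConvexOn ℝ (Icc (0:ℝ) 1) (F ∘ φ) := by
    have := hconv.comp_affineMap (AffineMap.lineMap y x)
    refine ConvexOn.congr (this.subset ?_ (convex_Icc 0 1)) ?_
    · intro t ht
      have := hmaps t ht
      simpa [AffineMap.lineMap_apply, hφ, add_comm] using this
    · intro t ht
      simp [hφ, AffineMap.lineMap_apply, add_comm]
  have hφd : HasDerivWithinAt φ (x - y) (Icc (0:ℝ) 1) 0 := by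
    have : HasDerivAt φ (x - y) 0 := by
      simpa [hφ] using ((hasDerivAt_id (0:ℝ)).smul_const (x - y)).const_add y
    exact this.hasDerivWithinAt
  have hφ0 : φ 0 = y := by simp [hφ]
  have hgd : HasDerivWithinAt (F ∘ φ) (F' (x - y)) (Icc (0:ℝ) 1) 0 := by
    have := (hφ0 ▸ hd).comp_hasDerivWithinAt 0 hφd hmaps
    simpa using this
  have := hg.le_slope_of_hasDerivWithinAt (by norm_num : (0:ℝ) ∈ Icc (0:ℝ) 1)
    (by norm_num : (1:ℝ) ∈ Icc (0:ℝ) 1) one_pos hgd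
  rw [slope_def_field] at this
  simp only [Function.comp, hφ, one_smul, zero_smul, add_zero] at this
  have h1 : y + (x - y) = x := by abel
  rw [h1] at this
  have : F' (x - y) ≤ F x - F y := by
    simpa [div_one] using this
  linarith

/-- The solution of the approximated distributed problem is a better response:
if x* maximizes the linearized objective R̃(·;y) over a feasible set S contained
in the nonnegative orthant and containing the base point y, then the exact sum
rate does not decrease: R_k(x*) ≥ R_k(y). -/
theorem approx_maximizer_is_better_response (N : ℕ) (hN : 1 ≤ N)
    (i : Fin N → ℝ) (hi : ∀ n, 0 < i n)
    (F : (Fin N → ℝ) → ℝ) (F' : (Fin N → ℝ) → ((Fin N → ℝ) →L[ℝ] ℝ))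
    (hconv : ConvexOn ℝ {p : Fin N → ℝ | ∀ n, 0 ≤ p n} F)
    (hdiff : ∀ y ∈ {p : Fin N → ℝ | ∀ n, 0 ≤ p n},
      HasFDerivWithinAt F (F' y) {p : Fin N → ℝ | ∀ n, 0 ≤ p n} y)
    (Rk : (Fin N → ℝ) → ℝ)
    (hRk : ∀ x, Rk x = (∑ n, Real.logb 2 (1 + x n / i n)) + F x)
    (Rt : (Fin N → ℝ) → (Fin N → ℝ) → ℝ)
    (hRt : ∀ x y, Rt x y
      = (∑ n, Real.logb 2 (1 + x n / i n)) + F y + F' y (x - y))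
    (S : Set (Fin N → ℝ)) (hS : S ⊆ {p : Fin N → ℝ | ∀ n, 0 ≤ p n})
    (y : Fin N → ℝ) (hy : y ∈ S)
    (xstar : Fin N → ℝ) (hxstar : xstar ∈ S)
    (hmax : ∀ z ∈ S, Rt z y ≤ Rt xstar y) :
    Rk y ≤ Rk xstar := by
  have hyS := hS hy
  have h1 : Rk y = Rt y y := by rw [hRk, hRt]; simp
  have h2 : Rt y y ≤ Rt xstar y := hmax y hy
  have h3 : Rt xstar y ≤ Rk xstar := by
    rw [hRk, hRt]
    have := convex_first_order hconv hyS (hdiff y hyS) (hS hxstar)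
    linarith
  linarith
end

section
/- (Appendix A, inactive total-power constraint) Let N ≥ 1, i_n > 0, α_n < 0, P_n > 0 for n = 1,…,N, and P > 0. Define p*_n = min(max(−1/(ln 2 · α_n) − i_n, 0), P_n), and suppose ∑_{n=1}^N p*_n ≤ P. Then p* maximizes f(p) = ∑_{n=1}^N [log₂(1 + p_n/i_n) + α_n p_n] over the feasible set {p ∈ ℝ^N : 0 ≤ p_n ≤ P_n for all n, and ∑_{n=1}^N p_n ≤ P}. -/
lemma ADRMP_key (iv αv Pm x : ℝ) (hi : 0 < iv) (hα : αv < 0) (hPm : 0 < Pm)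
    (hx0 : 0 ≤ x) (hxP : x ≤ Pm) :
    Real.logb 2 (1 + x / iv) + αv * x ≤
      Real.logb 2 (1 + min (max (-(1 / (Real.log 2 * αv)) - iv) 0) Pm / iv)
        + αv * min (max (-(1 / (Real.log 2 * αv)) - iv) 0) Pm := by
  set L := Real.log 2 with hLdef
  have hL : 0 < L := Real.log_pos one_lt_two
  have hLα : L * αv < 0 := mul_neg_of_pos_of_neg hL hα
  have hinv : (L * αv) * (1 / (L * αv)) = 1 := by
    field_simp
    exact div_self hα.ne
  set c := -(1 / (L * αv)) - iv with hc
  set s := min (max c 0) Pm with hs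
  have hs0 : 0 ≤ s := le_min (le_max_right _ _) hPm.le
  have hsP : s ≤ Pm := min_le_right _ _
  have his : 0 < iv + s := by linarith
  have ha : (0:ℝ) < 1 + x / iv := by positivity
  have hb : (0:ℝ) < 1 + s / iv := by positivity
  -- Step 1: log bound
  have hlog : Real.log (1 + x / iv) - Real.log (1 + s / iv) ≤ (x - s) / (iv + s) := by
    have h1 := Real.log_le_sub_one_of_pos (div_pos ha hb)
    rw [Real.log_div ha.ne' hb.ne'] at h1
    have heq : (1 + x / iv) / (1 + s / iv) - 1 = (x - s) / (iv + s) := by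
      rw [div_sub_one hb.ne', div_eq_div_iff hb.ne' his.ne']
      field_simp
      ring
    linarith [heq ▸ h1]
  -- Step 2: sign of the factor
  have hF : (x - s) * (1 / ((iv + s) * L) + αv) ≤ 0 := by
    rcases le_total c 0 with h0 | h0
    · have hse : s = 0 := by
        rw [hs, max_eq_right h0, min_eq_left hPm.le]
      have h0' : -(1 / (L * αv)) - iv ≤ 0 := h0
      have hpos0 : (0:ℝ) ≤ -(L * αv) := by linarith
      have h2 : 1 ≤ -(L * αv) * iv := by
        nlinarith [mul_le_mul_of_nonneg_left h0' hpos0]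
      have h3 : 1 / ((iv + s) * L) + αv ≤ 0 := by
        rw [hse, add_zero]
        have hpos : 0 < iv * L := by positivity
        rw [← sub_nonpos] at *
        have : 1 / (iv * L) ≤ -αv := by
          rw [div_le_iff₀ hpos]; nlinarith
        linarith
      have h4 : 0 ≤ x - s := by rw [hse]; linarith
      exact mul_nonpos_of_nonneg_of_nonpos h4 h3
    · rcases le_total Pm c with h1 | h1
      · have hse : s = Pm := by
          rw [hs, max_eq_left (le_trans hPm.le h1), min_eq_right h1]
        have h1' : iv + Pm ≤ -(1 / (L * αv)) := by
          have : Pm ≤ -(1 / (L * αv)) - iv := h1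
          linarith
        have hpos0 : (0:ℝ) ≤ -(L * αv) := by linarith
        have h2 : -(L * αv) * (iv + Pm) ≤ 1 := by
          nlinarith [mul_le_mul_of_nonneg_left h1' hpos0]
        have h3 : 0 ≤ 1 / ((iv + Pm) * L) + αv := by
          have hpos : 0 < (iv + Pm) * L := by positivity
          have : -αv ≤ 1 / ((iv + Pm) * L) := by
            rw [le_div_iff₀ hpos]; nlinarith
          linarith
        rw [hse]
        exact mul_nonpos_of_nonpos_of_nonneg (by linarith) h3
      · have hse : s = c := by
          rw [hs, max_eq_left h0, min_eq_left h1]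
        have h3 : 1 / ((iv + s) * L) + αv = 0 := by
          rw [hse, hc]
          have : iv + (-(1 / (L * αv)) - iv) = -(1 / (L * αv)) := by ring
          rw [this]
          field_simp
          ring
        rw [h3, mul_zero]
  -- Combine
  have hlogb : Real.logb 2 (1 + x / iv) - Real.logb 2 (1 + s / iv)
      ≤ (x - s) / ((iv + s) * L) := by
    have e1 : Real.logb 2 (1 + x / iv) - Real.logb 2 (1 + s / iv)
        = (Real.log (1 + x / iv) - Real.log (1 + s / iv)) / L := by
      rw [Real.logb, Real.logb]; ring
    have e2 : (x - s) / ((iv + s) * L) = ((x - s) / (iv + s)) / L := by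
      rw [div_div]
    rw [e1, e2]
    gcongr
  have : (x - s) / ((iv + s) * L) = (x - s) * (1 / ((iv + s) * L)) := by ring
  nlinarith [hlogb, hF]

/-- Appendix A, inactive total-power constraint (μ = 0): if the clamped
power allocation p*ₙ = [−1/(ln 2 · αₙ) − iₙ]₀^{Pₙ} satisfies the total power
budget, then it maximizes the ADRMP objective over the feasible set. -/
theorem ADRMP_solution_inactive_constraint (N : ℕ) (hN : 1 ≤ N)
    (i : Fin N → ℝ) (hi : ∀ n, 0 < i n)
    (α : Fin N → ℝ) (hα : ∀ n, α n < 0)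
    (Pmask : Fin N → ℝ) (hPmask : ∀ n, 0 < Pmask n)
    (P : ℝ) (hP : 0 < P)
    (pstar : Fin N → ℝ)
    (hpstar : ∀ n, pstar n
      = min (max (-(1 / (Real.log 2 * α n)) - i n) 0) (Pmask n))
    (hsum : ∑ n, pstar n ≤ P) :
    ∀ p : Fin N → ℝ, (∀ n, 0 ≤ p n ∧ p n ≤ Pmask n) → (∑ n, p n ≤ P) →
      ∑ n, (Real.logb 2 (1 + p n / i n) + α n * p n)
        ≤ ∑ n, (Real.logb 2 (1 + pstar n / i n) + α n * pstar n) := by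
  intro p hp _
  apply Finset.sum_le_sum
  intro n _
  rw [hpstar n]
  exact ADRMP_key (i n) (α n) (Pmask n) (p n) (hi n) (hα n) (hPmask n)
    (hp n).1 (hp n).2
end

section
/- (Appendix A, active total-power constraint) Let N ≥ 1, i_n > 0, α_n < 0, P_n > 0 for n = 1,…,N, P > 0, and let μ > 0. Define p(μ)_n = min(max(1/(ln 2 · (μ − α_n)) − i_n, 0), P_n), and suppose ∑_{n=1}^N p(μ)_n = P. Then p(μ) maximizes f(p) = ∑_{n=1}^N [log₂(1 + p_n/i_n) + α_n p_n] over the feasible set {p ∈ ℝ^N : 0 ≤ p_n ≤ P_n for all n, and ∑_{n=1}^N p_n ≤ P}. -/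
/-- Per-subcarrier Lagrangian optimality of the clamped water-filling level. -/
lemma ADRMP_key_ineq (i α Pn μ x : ℝ) (hi : 0 < i) (hα : α < 0) (hPn : 0 < Pn)
    (hμ : 0 < μ) (hx0 : 0 ≤ x) (hx1 : x ≤ Pn) :
    Real.logb 2 (1 + x / i) + (α - μ) * x
      ≤ Real.logb 2 (1 + min (max (1 / (Real.log 2 * (μ - α)) - i) 0) Pn / i)
        + (α - μ) * min (max (1 / (Real.log 2 * (μ - α)) - i) 0) Pn := by
  have hL0 : 0 < Real.log 2 := Real.log_pos (by norm_num)
  set L := Real.log 2 with hLdef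
  have hc : 0 < μ - α := by linarith
  set t := 1 / (L * (μ - α)) with ht
  have ht0 : 0 < t := by positivity
  have htLc : 1 / t = L * (μ - α) := by rw [ht, one_div_one_div]
  set q := min (max (t - i) 0) Pn with hq
  have hq0 : 0 ≤ q := le_min (le_max_right _ _) hPn.le
  have hqPn : q ≤ Pn := min_le_right _ _
  have hiq : 0 < i + q := by linarith
  have hix : 0 < i + x := by linarith
  have hkey : (x - q) / (i + q) ≤ L * (μ - α) * (x - q) := by
    rcases le_or_gt Pn (t - i) with h1 | h1
    · have hqe : q = Pn := by
        rw [hq, max_eq_left (by linarith), min_eq_right h1]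
      have h2 : i + q ≤ t := by rw [hqe]; linarith
      have h3 : 1 / t ≤ 1 / (i + q) := one_div_le_one_div_of_le hiq h2
      rw [htLc] at h3
      have hxq : x - q ≤ 0 := by rw [hqe]; linarith
      rw [div_eq_mul_one_div]
      nlinarith
    · rcases le_or_gt (t - i) 0 with h2 | h2
      · have hqe : q = 0 := by
          rw [hq, max_eq_right h2, min_eq_left hPn.le]
        have h4 : 1 / i ≤ 1 / t := one_div_le_one_div_of_le ht0 (by linarith)
        rw [htLc] at h4
        have h5 : 1 / (i + q) ≤ L * (μ - α) := by
          rw [hqe, add_zero]; exact h4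
        have hxq : 0 ≤ x - q := by rw [hqe]; linarith
        rw [div_eq_mul_one_div]
        nlinarith
      · have hqe : i + q = t := by
          rw [hq, max_eq_left h2.le, min_eq_left h1.le]; ring
        rw [div_eq_mul_one_div, hqe, htLc]
        ring_nf
        exact le_refl _
  have hlog : Real.log (i + x) - Real.log (i + q) ≤ (x - q) / (i + q) := by
    have h1 : Real.log ((i + x) / (i + q)) ≤ (i + x) / (i + q) - 1 :=
      Real.log_le_sub_one_of_pos (by positivity)
    rw [Real.log_div hix.ne' hiq.ne'] at h1
    have h2 : (i + x) / (i + q) - 1 = (x - q) / (i + q) := by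
      field_simp
      ring
    linarith [h1, h2 ▸ h1]
  have hlx : Real.logb 2 (1 + x / i) = (Real.log (i + x) - Real.log i) / L := by
    rw [Real.logb, hLdef]
    congr 1
    have : 1 + x / i = (i + x) / i := by field_simp
    rw [this, Real.log_div hix.ne' hi.ne']
  have hlq : Real.logb 2 (1 + q / i) = (Real.log (i + q) - Real.log i) / L := by
    rw [Real.logb, hLdef]
    congr 1
    have : 1 + q / i = (i + q) / i := by field_simp
    rw [this, Real.log_div hiq.ne' hi.ne']
  rw [hlx, hlq]
  have hdiff : Real.log (i + x) - Real.log (i + q) ≤ L * (μ - α) * (x - q) :=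
    le_trans hlog hkey
  rw [div_add' _ _ _ hL0.ne', div_add' _ _ _ hL0.ne', div_le_div_iff₀ hL0 hL0]
  nlinarith [hdiff, hL0]

/-- Appendix A, active total-power constraint (μ > 0): if the clamped power
allocation p(μ)ₙ = [1/(ln 2 · (μ − αₙ)) − iₙ]₀^{Pₙ} uses exactly the total
power budget P, then it maximizes the ADRMP objective over the feasible set. -/
theorem ADRMP_solution_active_constraint (N : ℕ) (hN : 1 ≤ N)
    (i : Fin N → ℝ) (hi : ∀ n, 0 < i n)
    (α : Fin N → ℝ) (hα : ∀ n, α n < 0)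
    (Pmask : Fin N → ℝ) (hPmask : ∀ n, 0 < Pmask n)
    (P : ℝ) (hP : 0 < P)
    (μ : ℝ) (hμ : 0 < μ)
    (pμ : Fin N → ℝ)
    (hpμ : ∀ n, pμ n
      = min (max (1 / (Real.log 2 * (μ - α n)) - i n) 0) (Pmask n))
    (hsum : ∑ n, pμ n = P) :
    ∀ p : Fin N → ℝ, (∀ n, 0 ≤ p n ∧ p n ≤ Pmask n) → (∑ n, p n ≤ P) →
      ∑ n, (Real.logb 2 (1 + p n / i n) + α n * p n)
        ≤ ∑ n, (Real.logb 2 (1 + pμ n / i n) + α n * pμ n) := by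
  intro p hp hple
  have h1 : ∀ n, Real.logb 2 (1 + p n / i n) + (α n - μ) * p n
      ≤ Real.logb 2 (1 + pμ n / i n) + (α n - μ) * pμ n := by
    intro n
    rw [hpμ n]
    exact ADRMP_key_ineq (i n) (α n) (Pmask n) μ (p n) (hi n) (hα n) (hPmask n)
      hμ (hp n).1 (hp n).2
  have hsum1 : ∑ n, (Real.logb 2 (1 + p n / i n) + (α n - μ) * p n)
      ≤ ∑ n, (Real.logb 2 (1 + pμ n / i n) + (α n - μ) * pμ n) :=
    Finset.sum_le_sum fun n _ => h1 n
  have e1 : ∑ n, (Real.logb 2 (1 + p n / i n) + α n * p n)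
      = ∑ n, (Real.logb 2 (1 + p n / i n) + (α n - μ) * p n) + μ * ∑ n, p n := by
    rw [Finset.mul_sum, ← Finset.sum_add_distrib]
    apply Finset.sum_congr rfl
    intros; ring
  have e2 : ∑ n, (Real.logb 2 (1 + pμ n / i n) + α n * pμ n)
      = ∑ n, (Real.logb 2 (1 + pμ n / i n) + (α n - μ) * pμ n) + μ * ∑ n, pμ n := by
    rw [Finset.mul_sum, ← Finset.sum_add_distrib]
    apply Finset.sum_congr rfl
    intros; ring
  rw [e1, e2, hsum]
  have : μ * ∑ n, p n ≤ μ * P := by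
    exact mul_le_mul_of_nonneg_left hple hμ.le
  linarith
end
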